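/- arXiv:2307.05446 — 6 statements merged into one kernel-verified Lean document; each statement's English description precedes it below -/
import Mathlib

section
/- Let G be a graph on vertex set {v_1,…,v_n} and let H be the graph formed by two disjoint copies G^1, G^2 of G with vertex sets {v_i^1} and {v_i^2}, together with the vertical edges v_i^1 v_i^2 for each i. If M = {v_1^1 v_1^2, …, v_p^1 v_p^2} is an acyclic matching in H, then {v_1,…,v_p} is an independent set in G. -/
/-- `M` is a matching in `G`: a set of edges of `G` that are pairwise vertex-disjoint. -/
def IsMatching {V : Type*} (G : SimpleGraph V) (M : Set (Sym2 V)) : Prop :=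
  M ⊆ G.edgeSet ∧ M.Pairwise fun e f => ∀ v, v ∈ e → v ∉ f

/-- The set of `M`-saturated vertices (endpoints of edges of `M`). -/
def mVerts {V : Type*} (M : Set (Sym2 V)) : Set V := {v | ∃ e ∈ M, v ∈ e}

/-- `M` is a perfect matching of `G`: a matching saturating every vertex. -/
def IsPerfectM {V : Type*} (G : SimpleGraph V) (M : Set (Sym2 V)) : Prop :=
  IsMatching G M ∧ ∀ v, v ∈ mVerts M

/-- `M` is an acyclic matching: the subgraph induced by the endpoints is a forest. -/
def IsAcyclicMatching {V : Type*} (G : SimpleGraph V) (M : Set (Sym2 V)) : Prop :=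
  IsMatching G M ∧ (G.induce (mVerts M)).IsAcyclic

/-- `M` is an induced matching: the subgraph induced by the endpoints is exactly `M`. -/
def IsInducedMatching {V : Type*} (G : SimpleGraph V) (M : Set (Sym2 V)) : Prop :=
  IsMatching G M ∧ ∀ e ∈ G.edgeSet, (∀ v, v ∈ e → v ∈ mVerts M) → e ∈ M

/-- `M` is a uniquely restricted matching: the subgraph induced by the endpoints
has exactly one perfect matching. -/
def IsURMatching {V : Type*} (G : SimpleGraph V) (M : Set (Sym2 V)) : Prop :=
  IsMatching G M ∧
    ∃! N : Set (Sym2 (mVerts M)), IsPerfectM (G.induce (mVerts M)) N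

/-- `S` is an independent set in `G`. -/
def IsIndep {V : Type*} (G : SimpleGraph V) (S : Set V) : Prop :=
  S.Pairwise fun u v => ¬ G.Adj u v

/-- Two disjoint copies of `G` together with the vertical edges `(v,true)(v,false)`. -/
def double {V : Type*} (G : SimpleGraph V) : SimpleGraph (V × Bool) :=
  SimpleGraph.fromRel fun a b =>
    (a.2 = b.2 ∧ G.Adj a.1 b.1) ∨ (a.1 = b.1 ∧ a.2 ≠ b.2)

theorem stmt8 {V : Type*} (G : SimpleGraph V) (S : Set V)
    (hM : IsAcyclicMatching (double G) ((fun v => s((v, true), (v, false))) '' S)) :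
    IsIndep G S := by
  intro u hu v hv huv hadj
  obtain ⟨hM1, hac⟩ := hM
  set M : Set (Sym2 (V × Bool)) := (fun v => s((v, true), (v, false))) '' S with hMdef
  have hmem : ∀ w ∈ S, ∀ b, (w, b) ∈ mVerts M := by
    intro w hw b
    refine ⟨s((w, true), (w, false)), ⟨w, hw, rfl⟩, ?_⟩
    cases b <;> simp
  let a : ↥(mVerts M) := ⟨(u, true), hmem u hu true⟩
  let b : ↥(mVerts M) := ⟨(v, true), hmem v hv true⟩
  let c : ↥(mVerts M) := ⟨(v, false), hmem v hv false⟩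
  let d : ↥(mVerts M) := ⟨(u, false), hmem u hu false⟩
  have hadj' : ∀ b : Bool, ((double G).induce (mVerts M)).Adj
      ⟨(u, b), hmem u hu b⟩ ⟨(v, b), hmem v hv b⟩ := by
    intro b
    simp only [SimpleGraph.comap_adj, SimpleGraph.induce, double,
      SimpleGraph.fromRel_adj]
    exact ⟨by simp [huv], Or.inl (Or.inl ⟨rfl, hadj⟩)⟩
  have hvert : ∀ w (hw : w ∈ S), ((double G).induce (mVerts M)).Adj
      ⟨(w, true), hmem w hw true⟩ ⟨(w, false), hmem w hw false⟩ := by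
    intro w hw
    simp only [SimpleGraph.comap_adj, SimpleGraph.induce, double,
      SimpleGraph.fromRel_adj]
    exact ⟨by simp, Or.inl (Or.inr ⟨rfl, by simp⟩)⟩
  have hab : ((double G).induce (mVerts M)).Adj a b := hadj' true
  have hbc : ((double G).induce (mVerts M)).Adj b c := hvert v hv
  have had : ((double G).induce (mVerts M)).Adj a d := hvert u hu
  have hdc : ((double G).induce (mVerts M)).Adj d c := hadj' false
  have hne_ab : a ≠ b := by simp [a, b, huv]
  have hne_ac : a ≠ c := by simp [a, c]
  have hne_bc : b ≠ c := by simp [b, c]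
  have hne_ad : a ≠ d := by simp [a, d]
  have hne_dc : d ≠ c := by simp [d, c, huv]
  let p1 : ((double G).induce (mVerts M)).Walk a c :=
    SimpleGraph.Walk.cons hab (SimpleGraph.Walk.cons hbc SimpleGraph.Walk.nil)
  let p2 : ((double G).induce (mVerts M)).Walk a c :=
    SimpleGraph.Walk.cons had (SimpleGraph.Walk.cons hdc SimpleGraph.Walk.nil)
  have hp1 : p1.IsPath := by
    simp [p1, SimpleGraph.Walk.isPath_def, hne_ab, hne_ac, hne_bc]
  have hp2 : p2.IsPath := by
    simp [p2, SimpleGraph.Walk.isPath_def, hne_ad, hne_ac, hne_dc]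
  have := (SimpleGraph.isAcyclic_iff_path_unique.mp hac) ⟨p1, hp1⟩ ⟨p2, hp2⟩
  have hw : p1 = p2 := congrArg Subtype.val this
  have hs := congrArg SimpleGraph.Walk.support hw
  simp only [p1, p2, SimpleGraph.Walk.support_cons, SimpleGraph.Walk.support_nil] at hs
  have hbd : b = d := by
    have := congrArg (fun l => l[1]?) hs
    simpa using this
  simp [b, d] at hbd
end

section
/- Let G be a graph on vertex set {v_1,…,v_n} and H as above (two copies of G plus vertical edges). If M = {v_1^1 v_1^2, …, v_p^1 v_p^2} is a uniquely restricted matching in H, then {v_1,…,v_p} is an independent set in G. -/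
theorem stmt10 {V : Type*} (G : SimpleGraph V) (S : Set V)
    (hM : IsURMatching (double G) ((fun v => s((v, true), (v, false))) '' S)) :
    IsIndep G S := by
  intro u hu v hv hne hadj
  obtain ⟨hmatch, N, hN, huniq⟩ := hM
  set M : Set (Sym2 (V × Bool)) := (fun v => s((v, true), (v, false))) '' S with hMdef
  -- membership facts
  have hmem : ∀ (x : V) (b : Bool), x ∈ S → (x, b) ∈ mVerts M := by
    intro x b hx
    exact ⟨s((x, true), (x, false)), ⟨x, hx, rfl⟩, by cases b <;> simp⟩
  have hmem' : ∀ p ∈ mVerts M, p.1 ∈ S := by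
    intro p hp
    obtain ⟨e, ⟨x, hx, he⟩, hpe⟩ := hp
    subst he
    rcases Sym2.mem_iff.mp hpe with h | h <;> subst h <;> exact hx
  -- the vertical edges, as a family indexed by S
  let vt : {x // x ∈ S} → Sym2 (mVerts M) := fun x =>
    s(⟨(x.1, true), hmem x.1 true x.2⟩, ⟨(x.1, false), hmem x.1 false x.2⟩)
  have hvt_mem : ∀ (x : {x // x ∈ S}) (w : mVerts M), w ∈ vt x ↔ (w : V × Bool).1 = x.1 := by
    intro x w
    constructor
    · intro h
      rcases Sym2.mem_iff.mp h with rfl | rfl <;> rfl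
    · intro h
      rcases w with ⟨⟨a, b⟩, hw⟩
      simp only at h
      subst h
      cases b
      · exact Sym2.mem_iff.mpr (Or.inr rfl)
      · exact Sym2.mem_iff.mpr (Or.inl rfl)
  -- the horizontal edges through the pair u v
  let hz : Bool → Sym2 (mVerts M) := fun t =>
    s(⟨(u, t), hmem u t hu⟩, ⟨(v, t), hmem v t hv⟩)
  have hz_mem : ∀ (t : Bool) (w : mVerts M),
      w ∈ hz t ↔ (w : V × Bool) = (u, t) ∨ (w : V × Bool) = (v, t) := by
    intro t w
    constructor
    · intro h
      rcases Sym2.mem_iff.mp h with rfl | rfl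
      · exact Or.inl rfl
      · exact Or.inr rfl
    · intro h
      rcases h with h | h
      · exact Sym2.mem_iff.mpr (Or.inl (Subtype.ext h))
      · exact Sym2.mem_iff.mpr (Or.inr (Subtype.ext h))
  -- two perfect matchings
  let N1 : Set (Sym2 (mVerts M)) := Set.range vt
  let N2 : Set (Sym2 (mVerts M)) :=
    {e | (∃ x : {x // x ∈ S}, x.1 ≠ u ∧ x.1 ≠ v ∧ e = vt x) ∨ ∃ t, e = hz t}
  have hvt_edge : ∀ x : {x // x ∈ S}, vt x ∈ ((double G).induce (mVerts M)).edgeSet := by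
    intro x
    rw [SimpleGraph.mem_edgeSet]
    show (double G).Adj (x.1, true) (x.1, false)
    simp [double, SimpleGraph.fromRel_adj]
  have hz_edge : ∀ t : Bool, hz t ∈ ((double G).induce (mVerts M)).edgeSet := by
    intro t
    rw [SimpleGraph.mem_edgeSet]
    show (double G).Adj (u, t) (v, t)
    simp [double, SimpleGraph.fromRel_adj, hadj, hadj.ne]
  -- N1 is a perfect matching
  have hN1 : IsPerfectM ((double G).induce (mVerts M)) N1 := by
    refine ⟨⟨?_, ?_⟩, ?_⟩
    · rintro e ⟨x, rfl⟩; exact hvt_edge x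
    · rintro e ⟨x, rfl⟩ f ⟨y, rfl⟩ hef w hwx hwy
      rw [hvt_mem] at hwx hwy
      exact hef (by rw [Subtype.ext (hwx ▸ hwy : x.1 = y.1)])
    · intro w
      refine ⟨vt ⟨(w : V × Bool).1, hmem' _ w.2⟩, ⟨_, rfl⟩, ?_⟩
      rw [hvt_mem]
  -- N2 is a perfect matching
  have hN2 : IsPerfectM ((double G).induce (mVerts M)) N2 := by
    refine ⟨⟨?_, ?_⟩, ?_⟩
    · rintro e (⟨x, -, -, rfl⟩ | ⟨t, rfl⟩)
      · exact hvt_edge x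
      · exact hz_edge t
    · rintro e (⟨x, hxu, hxv, rfl⟩ | ⟨t, rfl⟩) f (⟨y, hyu, hyv, rfl⟩ | ⟨s, rfl⟩) hef w hwx hwy
      · rw [hvt_mem] at hwx hwy
        exact hef (by rw [Subtype.ext (hwx ▸ hwy : x.1 = y.1)])
      · rw [hvt_mem] at hwx
        rw [hz_mem] at hwy
        rcases hwy with h | h
        · exact hxu (by rw [← hwx, h])
        · exact hxv (by rw [← hwx, h])
      · rw [hz_mem] at hwx
        rw [hvt_mem] at hwy
        rcases hwx with h | h
        · exact hyu (by rw [← hwy, h])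
        · exact hyv (by rw [← hwy, h])
      · rw [hz_mem] at hwx hwy
        apply hef
        have hts : t = s := by
          rcases hwx with h | h <;> rcases hwy with h' | h'
          · exact congrArg Prod.snd (h ▸ h' : ((u, t) : V × Bool) = (u, s))
          · exact absurd (congrArg Prod.fst (h ▸ h' : ((u, t) : V × Bool) = (v, s))) hadj.ne
          · exact absurd (congrArg Prod.fst (h ▸ h' : ((v, t) : V × Bool) = (u, s))).symm hadj.ne
          · exact congrArg Prod.snd (h ▸ h' : ((v, t) : V × Bool) = (v, s))
        rw [hts]
    · intro w
      by_cases hwu : (w : V × Bool).1 = u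
      · refine ⟨hz (w : V × Bool).2, Or.inr ⟨_, rfl⟩, ?_⟩
        rw [hz_mem]
        exact Or.inl (by rw [← hwu])
      by_cases hwv : (w : V × Bool).1 = v
      · refine ⟨hz (w : V × Bool).2, Or.inr ⟨_, rfl⟩, ?_⟩
        rw [hz_mem]
        exact Or.inr (by rw [← hwv])
      · refine ⟨vt ⟨(w : V × Bool).1, hmem' _ w.2⟩, Or.inl ⟨_, hwu, hwv, rfl⟩, ?_⟩
        rw [hvt_mem]
  -- uniqueness gives N1 = N2, but hz true ∈ N2 \ N1
  have h12 : N1 = N2 := (huniq N1 hN1).trans (huniq N2 hN2).symm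
  have : hz true ∈ N1 := by
    rw [h12]; exact Or.inr ⟨true, rfl⟩
  obtain ⟨x, hx⟩ := this
  have h1 : (⟨(u, true), hmem u true hu⟩ : mVerts M) ∈ vt x := by
    rw [hx]; exact Sym2.mem_iff.mpr (Or.inl rfl)
  have h2 : (⟨(v, true), hmem v true hv⟩ : mVerts M) ∈ vt x := by
    rw [hx]; exact Sym2.mem_iff.mpr (Or.inr rfl)
  rw [hvt_mem] at h1 h2
  exact hadj.ne (h1.trans h2.symm)
end

section
/- Let G be a graph on vertex set {v_1,…,v_n}, and let H have vertex set V(G) ∪ {v'_1,…,v'_n} and edge set E(G) ∪ {v_i v'_i : i ∈ [n]} ∪ {v_i v'_j : v_j ∈ N_G(v_i)} ∪ {v'_i v'_j : v_j ∈ N_G(v_i)}. Then G has an independent set of size at least ℓ if and only if H has an acyclic matching of size at least ℓ. -/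
/-- The graph `H` on `V × Bool` (original copy `(·, false)`, primed copy `(·, true)`)
with edges `v_i v_j` (from `G`), `v_i v'_i`, `v_i v'_j` and `v'_i v'_j` for `v_i v_j ∈ E(G)`. -/
def blowup {V : Type*} (G : SimpleGraph V) : SimpleGraph (V × Bool) :=
  SimpleGraph.fromRel fun a b =>
    (a.1 = b.1 ∧ a.2 ≠ b.2) ∨ G.Adj a.1 b.1

open SimpleGraph

lemma aux_acyclic_of_unique_nbr {W : Type*} {F : SimpleGraph W}
    (huniq : ∀ a b c, F.Adj a b → F.Adj a c → b = c) : F.IsAcyclic := by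
  intro v w hw
  cases w with
  | nil => exact hw.not_of_nil
  | cons h p =>
    have h3 := hw.three_le_length
    rw [Walk.cons_isCycle_iff] at hw
    obtain ⟨hp, _⟩ := hw
    cases p with
    | nil => exact F.irrefl h
    | cons h2 q =>
      have hx := huniq _ _ _ h2 h.symm
      subst hx
      have hq : q = Walk.nil := Walk.isPath_iff_eq_nil.mp hp.of_cons
      subst hq
      simp at h3

lemma aux_parity {W : Type*} {F : SimpleGraph W} (hF : F.IsAcyclic) {u v r : W}
    (h : F.Adj u v) (pu : F.Path u r) (pv : F.Path v r) :
    (pu : F.Walk u r).length % 2 ≠ (pv : F.Walk v r).length % 2 := by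
  classical
  by_cases hu : u ∈ (pv : F.Walk v r).support
  · have hdrop : ((pv : F.Walk v r).dropUntil u hu).IsPath := pv.2.dropUntil hu
    have h1 : (⟨_, hdrop⟩ : F.Path u r) = pu := hF.path_unique _ _
    have htake : ((pv : F.Walk v r).takeUntil u hu).IsPath := pv.2.takeUntil hu
    have hsingle : (Walk.cons h.symm Walk.nil : F.Walk v u).IsPath := by
      simp [Walk.cons_isPath_iff, h.ne']
    have h2 : (⟨_, htake⟩ : F.Path v u) = ⟨_, hsingle⟩ := hF.path_unique _ _
    have hlen1 : ((pv : F.Walk v r).takeUntil u hu).length = 1 := by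
      have := congrArg (fun p : F.Path v u => (p : F.Walk v u).length) h2
      simpa using this
    have hlen2 : ((pv : F.Walk v r).dropUntil u hu).length = (pu : F.Walk u r).length := by
      have := congrArg (fun p : F.Path u r => (p : F.Walk u r).length) h1
      simpa using this
    have hspec := Walk.take_spec (pv : F.Walk v r) hu
    have := congrArg Walk.length hspec
    rw [Walk.length_append, hlen1, hlen2] at this
    omega
  · have hcons : (Walk.cons h (pv : F.Walk v r)).IsPath := by
      rw [Walk.cons_isPath_iff]; exact ⟨pv.2, hu⟩
    have h1 : (⟨_, hcons⟩ : F.Path u r) = pu := hF.path_unique _ _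
    have : (Walk.cons h (pv : F.Walk v r)).length = (pu : F.Walk u r).length := by
      have := congrArg (fun p : F.Path u r => (p : F.Walk u r).length) h1
      simpa using this
    rw [Walk.length_cons] at this
    omega

lemma aux_coloring {W : Type*} {F : SimpleGraph W} (hF : F.IsAcyclic) :
    ∃ c : W → ℕ, (∀ v, c v = 0 ∨ c v = 1) ∧ ∀ u v, F.Adj u v → c u ≠ c v := by
  classical
  have hre : ∀ v : W, F.Reachable v (F.connectedComponentMk v).out := by
    intro v
    exact (ConnectedComponent.eq.mp ((F.connectedComponentMk v).out_eq)).symm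
  let pth : ∀ v : W, F.Path v (F.connectedComponentMk v).out :=
    fun v => (Classical.choice (hre v)).toPath
  refine ⟨fun v => ((pth v).1.length) % 2, fun v => Nat.mod_two_eq_zero_or_one _, ?_⟩
  intro u v huv
  have hroot : (F.connectedComponentMk v).out = (F.connectedComponentMk u).out := by
    have : F.connectedComponentMk v = F.connectedComponentMk u :=
      ConnectedComponent.sound huv.symm.reachable
    rw [this]
  have hcopy : ((pth v).1.copy rfl hroot).IsPath := by
    simpa using (pth v).2
  have := aux_parity hF huv (pth u) ⟨_, hcopy⟩
  simpa using this

theorem stmt15 {V : Type*} [Fintype V] (G : SimpleGraph V) (ℓ : ℕ) :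
    (∃ I : Set V, IsIndep G I ∧ ℓ ≤ I.ncard) ↔
    (∃ M : Set (Sym2 (V × Bool)), IsAcyclicMatching (blowup G) M ∧ ℓ ≤ M.ncard) := by
  classical
  constructor
  · rintro ⟨I, hI, hle⟩
    set emb : V → Sym2 (V × Bool) := fun v => s((v, false), (v, true)) with hemb
    refine ⟨emb '' I, ⟨⟨?_, ?_⟩, ?_⟩, ?_⟩
    · rintro e ⟨v, hv, rfl⟩
      rw [SimpleGraph.mem_edgeSet]
      show (blowup G).Adj (v, false) (v, true)
      unfold blowup
      rw [SimpleGraph.fromRel_adj]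
      exact ⟨by simp, Or.inl (Or.inl ⟨rfl, by simp⟩)⟩
    · rintro e ⟨u, hu, rfl⟩ f ⟨v, hv, rfl⟩ hne x hxe hxf
      have huv : u ≠ v := fun h => hne (by rw [h])
      rw [hemb, Sym2.mem_iff] at hxe hxf
      rcases hxe with rfl | rfl <;> rcases hxf with h | h <;>
        exact huv (congrArg Prod.fst h)
    · -- acyclic
      apply aux_acyclic_of_unique_nbr
      have hmem : ∀ x : V × Bool, x ∈ mVerts (emb '' I) → x.1 ∈ I := by
        rintro x ⟨e, ⟨v, hv, rfl⟩, hx⟩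
        rw [hemb, Sym2.mem_iff] at hx
        rcases hx with rfl | rfl <;> exact hv
      have hadj : ∀ (a b : ↥(mVerts (emb '' I))),
          ((blowup G).induce (mVerts (emb '' I))).Adj a b →
          (b : V × Bool) = ((a : V × Bool).1, !(a : V × Bool).2) := by
        rintro ⟨a, ha⟩ ⟨b, hb⟩ hab
        have h1 : (blowup G).Adj a b := hab
        unfold blowup at h1
        rw [SimpleGraph.fromRel_adj] at h1
        obtain ⟨hne, h1⟩ := h1
        have hnadj : ¬ G.Adj a.1 b.1 ∧ ¬ G.Adj b.1 a.1 := by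
          constructor <;> intro hadj
          · rcases eq_or_ne a.1 b.1 with h | h
            · exact G.irrefl (h ▸ hadj)
            · exact hI (hmem a ha) (hmem b hb) h hadj
          · rcases eq_or_ne b.1 a.1 with h | h
            · exact G.irrefl (h ▸ hadj)
            · exact hI (hmem b hb) (hmem a ha) h hadj
        have h2 : a.1 = b.1 ∧ a.2 ≠ b.2 := by tauto
        have : b.2 = !a.2 := by
          rcases h2 with ⟨_, h2⟩
          cases ha2 : a.2 <;> cases hb2 : b.2 <;> simp_all
        exact Prod.ext h2.1.symm this
      intro a b c h1 h2
      have hb := hadj a b h1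
      have hc := hadj a c h2
      exact Subtype.ext (hb.trans hc.symm)
    · have hinj : Set.InjOn emb I := by
        intro a _ b _ h
        rw [hemb] at h
        simp only [Sym2.eq_iff] at h
        rcases h with ⟨h, _⟩ | ⟨h, _⟩ <;> exact congrArg Prod.fst h
      rw [Set.ncard_image_of_injOn hinj]; exact hle
  · rintro ⟨M, ⟨⟨hsub, hdisj⟩, hacyc⟩, hle⟩
    rcases isEmpty_or_nonempty (V × Bool) with hemp | hne
    · have hM : M = ∅ := Set.eq_empty_of_isEmpty M
      refine ⟨∅, by simp [IsIndep], ?_⟩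
      simp only [hM, Set.ncard_empty] at hle
      simpa using hle
    obtain ⟨c, hc01, hcadj⟩ := aux_coloring hacyc
    have hex : ∀ e ∈ M, ∃ x : V × Bool, x ∈ e ∧ ∃ hx : x ∈ mVerts M, c ⟨x, hx⟩ = 0 := by
      intro e
      induction e using Sym2.ind with
      | _ a b =>
        intro he
        have hadj : (blowup G).Adj a b := ((blowup G).mem_edgeSet).mp (hsub he)
        have ha : a ∈ mVerts M := ⟨_, he, by simp⟩
        have hb : b ∈ mVerts M := ⟨_, he, by simp⟩
        have hFadj : ((blowup G).induce (mVerts M)).Adj ⟨a, ha⟩ ⟨b, hb⟩ := hadj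
        have hne := hcadj _ _ hFadj
        rcases hc01 ⟨a, ha⟩ with h0 | h1
        · exact ⟨a, by simp, ha, h0⟩
        · rcases hc01 ⟨b, hb⟩ with h0 | h1'
          · exact ⟨b, by simp, hb, h0⟩
          · exact absurd (h1.trans h1'.symm) hne
    choose! φ hφ using hex
    have key : ∀ e ∈ M, ∀ f ∈ M, e ≠ f →
        ¬((φ e).1 = (φ f).1 ∨ G.Adj (φ e).1 (φ f).1) := by
      intro e he f hf hef hcon
      obtain ⟨hxe, hxm, hxc⟩ := hφ e he
      obtain ⟨hye, hym, hyc⟩ := hφ f hf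
      have hxy : φ e ≠ φ f := fun h' => hdisj he hf hef (φ e) hxe (h' ▸ hye)
      have hadj : (blowup G).Adj (φ e) (φ f) := by
        unfold blowup
        rw [SimpleGraph.fromRel_adj]
        refine ⟨hxy, Or.inl ?_⟩
        rcases hcon with h | h
        · refine Or.inl ⟨h, fun h2 => hxy (Prod.ext h h2)⟩
        · exact Or.inr h
      have hFadj : ((blowup G).induce (mVerts M)).Adj ⟨φ e, hxm⟩ ⟨φ f, hym⟩ := hadj
      exact hcadj _ _ hFadj (hxc.trans hyc.symm)
    have hinj : Set.InjOn (fun e => (φ e).1) M := by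
      intro e he f hf h
      by_contra hef
      exact key e he f hf hef (Or.inl h)
    refine ⟨(fun e => (φ e).1) '' M, ?_, ?_⟩
    · rintro u ⟨e, he, rfl⟩ v ⟨f, hf, rfl⟩ hne hadj
      have hef : e ≠ f := fun h => hne (by rw [h])
      exact key e he f hf hef (Or.inr hadj)
    · rw [Set.ncard_image_of_injOn hinj]; exact hle
end

section
/- Let G and H be as in the previous construction (H doubles G with edges v_i v'_i, v_i v'_j and v'_i v'_j for adjacent v_i, v_j). Then the independence number of H equals the maximum size of an acyclic matching in H. -/
open SimpleGraph in
lemma acyclic_colorable {W : Type*} [Finite W] :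
    ∀ (n : ℕ) (Γ : SimpleGraph W), Γ.edgeSet.ncard ≤ n → Γ.IsAcyclic →
      Nonempty (Γ.Coloring Bool) := by
  classical
  intro n
  induction n with
  | zero =>
    intro Γ hcard _
    refine ⟨Coloring.mk (fun _ => true) ?_⟩
    intro u v huv
    have : Γ.edgeSet = ∅ := (Set.ncard_eq_zero (Set.toFinite _)).mp (Nat.le_zero.mp hcard)
    exact absurd (this ▸ (Γ.mem_edgeSet.mpr huv)) (by simp)
  | succ n ih =>
    intro Γ hcard hac
    by_cases hne : Γ.edgeSet = ∅
    · refine ⟨Coloring.mk (fun _ => true) ?_⟩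
      intro u v huv
      exact absurd (hne ▸ Γ.mem_edgeSet.mpr huv) (by simp)
    · obtain ⟨e, he⟩ := Set.nonempty_iff_ne_empty.mpr hne
      obtain ⟨a, b⟩ := e
      have hab : Γ.Adj a b := Γ.mem_edgeSet.mp he
      set Γ' := Γ \ fromEdgeSet {s(a,b)} with hΓ'
      have hle : Γ' ≤ Γ := sdiff_le
      have hac' : Γ'.IsAcyclic := fun v c hc => hac (c.mapLe hle) (hc.mapLe hle)
      have hsub : Γ'.edgeSet ⊆ Γ.edgeSet := edgeSet_mono hle
      have hemem : s(a,b) ∉ Γ'.edgeSet := by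
        simp [hΓ', hab.ne]
      have hcard' : Γ'.edgeSet.ncard ≤ n := by
        have := Set.ncard_lt_ncard ((Set.ssubset_iff_of_subset hsub).mpr ⟨_, he, hemem⟩)
          (Set.toFinite _)
        omega
      obtain ⟨c⟩ := ih Γ' hcard' hac'
      have hnr : ¬ Γ'.Reachable a b := (isAcyclic_iff_forall_adj_isBridge.mp hac) hab
      set c' : W → Bool := fun w =>
        if Γ'.Reachable a w ∧ c a = c b then !(c w) else c w with hc'
      have key : ∀ u v, Γ'.Adj u v → c' u ≠ c' v := by
        intro u v huv
        have hr : Γ'.Reachable a u ↔ Γ'.Reachable a v :=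
          ⟨fun h => h.trans huv.reachable, fun h => h.trans huv.symm.reachable⟩
        have hcne := c.valid huv
        simp only [hc']
        by_cases h1 : Γ'.Reachable a u ∧ c a = c b
        · rw [if_pos h1, if_pos ⟨hr.mp h1.1, h1.2⟩]
          simpa using hcne
        · rw [if_neg h1, if_neg (fun h2 => h1 ⟨hr.mpr h2.1, h2.2⟩)]
          exact hcne
      have hca : c' a ≠ c' b := by
        have h1 : c' a = if c a = c b then !(c a) else c a := by
          simp only [hc']
          rw [if_congr (and_iff_right (Reachable.refl a)) rfl rfl]
        have h2 : c' b = c b := by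
          simp only [hc']
          rw [if_neg (fun h => hnr h.1)]
        rw [h1, h2]
        by_cases h : c a = c b <;> simp [h]
      refine ⟨Coloring.mk c' ?_⟩
      intro u v huv
      by_cases hedge : s(u,v) = s(a,b)
      · rw [Sym2.eq_iff] at hedge
        rcases hedge with ⟨rfl, rfl⟩ | ⟨rfl, rfl⟩
        · exact hca
        · exact hca.symm
      · exact key u v ⟨huv, by simp [hedge, huv.ne]⟩

open SimpleGraph in
lemma blowup_adj {V : Type*} (G : SimpleGraph V) (p q : V × Bool) :
    (blowup G).Adj p q ↔ p ≠ q ∧ (p.1 = q.1 ∨ G.Adj p.1 q.1) := by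
  simp only [blowup, fromRel_adj]
  constructor
  · rintro ⟨hne, (⟨h, _⟩ | h) | (⟨h, _⟩ | h)⟩
    exacts [⟨hne, Or.inl h⟩, ⟨hne, Or.inr h⟩, ⟨hne, Or.inl h.symm⟩, ⟨hne, Or.inr h.symm⟩]
  · rintro ⟨hne, h | h⟩
    · exact ⟨hne, Or.inl (Or.inl ⟨h, fun h2 => hne (Prod.ext h h2)⟩)⟩
    · exact ⟨hne, Or.inl (Or.inr h)⟩


open SimpleGraph in
lemma indep_to_am {V : Type*} (G : SimpleGraph V) (I : Set (V × Bool))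
    (hI : IsIndep (blowup G) I) :
    ∃ M : Set (Sym2 (V × Bool)), IsAcyclicMatching (blowup G) M ∧ M.ncard = I.ncard := by
  classical
  -- basic facts about I
  have hfst : ∀ p ∈ I, ∀ q ∈ I, p.1 = q.1 → p = q := by
    intro p hp q hq h
    by_contra hne
    exact hI hp hq hne ((blowup_adj G p q).mpr ⟨hne, Or.inl h⟩)
  have hnadj : ∀ p ∈ I, ∀ q ∈ I, ¬ G.Adj p.1 q.1 := by
    intro p hp q hq hadj
    have hne : p ≠ q := fun h => G.irrefl (h ▸ hadj)
    exact hI hp hq hne ((blowup_adj G p q).mpr ⟨hne, Or.inr hadj⟩)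
  set f : V × Bool → Sym2 (V × Bool) := fun p => s((p.1, false), (p.1, true)) with hf
  refine ⟨f '' I, ⟨⟨?_, ?_⟩, ?_⟩, ?_⟩
  · rintro e ⟨p, hp, rfl⟩
    rw [mem_edgeSet, blowup_adj]
    exact ⟨by simp, Or.inl rfl⟩
  · rintro e ⟨p, hp, rfl⟩ fe ⟨q, hq, rfl⟩ hne v hv hv'
    have hpq : p.1 ≠ q.1 := by
      rintro h
      exact hne (by rw [hf]; simp [h])
    simp only [hf, Sym2.mem_iff] at hv hv'
    rcases hv with rfl | rfl <;> rcases hv' with h | h <;>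
      exact hpq (Prod.mk.inj h).1
  · -- acyclicity
    have hmv : ∀ x : V × Bool, x ∈ mVerts (f '' I) ↔ ∃ p ∈ I, x.1 = p.1 := by
      intro x
      constructor
      · rintro ⟨e, ⟨p, hp, rfl⟩, hx⟩
        simp only [hf, Sym2.mem_iff] at hx
        rcases hx with rfl | rfl <;> exact ⟨p, hp, rfl⟩
      · rintro ⟨p, hp, h⟩
        refine ⟨f p, ⟨p, hp, rfl⟩, ?_⟩
        simp only [hf, Sym2.mem_iff]
        rcases x with ⟨a, _ | _⟩ <;> simp_all
    set F := (blowup G).induce (mVerts (f '' I)) with hF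
    have huniq : ∀ x z : mVerts (f '' I), F.Adj x z →
        (z : V × Bool) = ((x : V × Bool).1, !(x : V × Bool).2) := by
      rintro x z hadj
      have h := (blowup_adj G _ _).mp hadj
      rcases h.2 with h1 | h1
      · have h2 : (x : V × Bool).2 ≠ (z : V × Bool).2 := by
          intro h2
          exact h.1 (Prod.ext h1 h2)
        refine Prod.ext h1.symm ?_
        cases hx : (x : V × Bool).2 <;> cases hz : (z : V × Bool).2 <;> simp_all
      · exfalso
        obtain ⟨p, hp, hxp⟩ := (hmv _).mp x.2
        obtain ⟨q, hq, hzq⟩ := (hmv _).mp z.2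
        exact hnadj p hp q hq (hxp ▸ hzq ▸ h1)
    rw [isAcyclic_iff_forall_adj_isBridge]
    intro x y hadj
    rw [isBridge_iff]
    refine fun hr => ?_
    obtain ⟨w⟩ := hr
    cases w with
    | nil => exact hadj.ne rfl
    | cons h p =>
      refine h.2 ⟨?_, h.1.ne⟩
      have : _ = _ := (huniq _ _ h.1).trans (huniq _ _ hadj).symm
      rw [Subtype.ext this]
      simp
  · rw [Set.ncard_image_of_injOn]
    intro p hp q hq h
    simp only [hf, Sym2.eq_iff] at h
    rcases h with ⟨h, _⟩ | ⟨h, _⟩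
    · exact hfst p hp q hq (Prod.mk.inj h).1
    · simpa using congrArg Prod.snd h

open SimpleGraph in
lemma am_to_indep {W : Type*} [Finite W] (Γ : SimpleGraph W) (M : Set (Sym2 W))
    (hM : IsAcyclicMatching Γ M) :
    ∃ I : Set W, IsIndep Γ I ∧ I.ncard = M.ncard := by
  classical
  obtain ⟨C⟩ := acyclic_colorable _ (Γ.induce (mVerts M)) le_rfl hM.2
  set I : Set W := {v | ∃ h : v ∈ mVerts M, C ⟨v, h⟩ = true} with hI
  set g : W → Sym2 W := fun v =>
    if h : ∃ e ∈ M, v ∈ e then h.choose else s(v, v) with hg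
  have hgmem : ∀ v ∈ mVerts M, g v ∈ M ∧ v ∈ g v := by
    intro v hv
    have h : ∃ e ∈ M, v ∈ e := hv
    rw [hg]
    simp only [dif_pos h]
    exact ⟨h.choose_spec.1, h.choose_spec.2⟩
  have hguniq : ∀ v ∈ mVerts M, ∀ e ∈ M, v ∈ e → g v = e := by
    intro v hv e he hve
    by_contra hne
    exact (hM.1.2 (hgmem v hv).1 he hne) v (hgmem v hv).2 hve
  -- two distinct colored-true vertices are non-adjacent
  have hind : IsIndep Γ I := by
    intro u hu v hv hne hadj
    obtain ⟨hum, hcu⟩ := hu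
    obtain ⟨hvm, hcv⟩ := hv
    have : (Γ.induce (mVerts M)).Adj ⟨u, hum⟩ ⟨v, hvm⟩ := hadj
    exact C.valid this (hcu.trans hcv.symm)
  refine ⟨I, hind, ?_⟩
  have himg : g '' I = M := by
    apply Set.eq_of_subset_of_subset
    · rintro e ⟨v, ⟨hv, _⟩, rfl⟩
      exact (hgmem v hv).1
    · intro e he
      induction e with
      | h x y =>
        have hxy : Γ.Adj x y := hM.1.1 he
        have hxm : x ∈ mVerts M := ⟨_, he, by simp⟩
        have hym : y ∈ mVerts M := ⟨_, he, by simp⟩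
        have hFadj : (Γ.induce (mVerts M)).Adj ⟨x, hxm⟩ ⟨y, hym⟩ := hxy
        have hcne := C.valid hFadj
        rcases Bool.eq_false_or_eq_true (C ⟨x, hxm⟩) with hcx | hcx
        · exact ⟨x, ⟨hxm, hcx⟩, hguniq x hxm _ he (by simp)⟩
        · have hcy : C ⟨y, hym⟩ = true := by
            rcases Bool.eq_false_or_eq_true (C ⟨y, hym⟩) with h | h
            · exact h
            · exact absurd (hcx.trans h.symm) hcne
          exact ⟨y, ⟨hym, hcy⟩, hguniq y hym _ he (by simp)⟩
  have hinj : Set.InjOn g I := by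
    rintro u ⟨hum, hcu⟩ v ⟨hvm, hcv⟩ h
    by_contra hne
    have hu' : u ∈ g v := h ▸ (hgmem u hum).2
    have he : g v = s(u, v) := (Sym2.mem_and_mem_iff hne).mp ⟨hu', (hgmem v hvm).2⟩
    have hadj : Γ.Adj u v := Γ.mem_edgeSet.mp (hM.1.1 (he ▸ (hgmem v hvm).1))
    have : (Γ.induce (mVerts M)).Adj ⟨u, hum⟩ ⟨v, hvm⟩ := hadj
    exact C.valid this (hcu.trans hcv.symm)
  rw [← himg, Set.ncard_image_of_injOn hinj]

theorem stmt16 {V : Type*} [Fintype V] (G : SimpleGraph V) :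
    sSup {n : ℕ | ∃ I : Set (V × Bool), IsIndep (blowup G) I ∧ I.ncard = n} =
    sSup {n : ℕ | ∃ M : Set (Sym2 (V × Bool)),
      IsAcyclicMatching (blowup G) M ∧ M.ncard = n} := by
  refine congrArg sSup (Set.ext fun n => ⟨?_, ?_⟩)
  · rintro ⟨I, hI, rfl⟩
    obtain ⟨M, hM, hMc⟩ := indep_to_am G I hI
    exact ⟨M, hM, hMc⟩
  · rintro ⟨M, hM, rfl⟩
    obtain ⟨I, hI, hIc⟩ := am_to_indep (blowup G) M hM
    exact ⟨I, hI, hIc⟩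
end

section
/- If M is a uniquely restricted matching in a graph G and e is an edge of the subgraph H induced by the M-saturated vertices that is a matched bridge and a pendant edge of H, then removing both endpoints of e from H leaves a graph whose restriction of M (minus e) is still a uniquely restricted matching, and the pendant endpoint of e is non-adjacent to all remaining vertices of H. -/
theorem stmt18 {V : Type*} (G : SimpleGraph V) (M : Set (Sym2 V))
    (hM : IsURMatching G M) (x y : V) (he : s(x, y) ∈ M)
    (hx : x ∈ mVerts M) (hy : y ∈ mVerts M)
    (hbridge : (G.induce (mVerts M)).IsBridge s(⟨x, hx⟩, ⟨y, hy⟩))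
    (hpendant : (G.induce (mVerts M)).neighborSet ⟨x, hx⟩ = {⟨y, hy⟩}) :
    IsURMatching G (M \ {s(x, y)}) ∧
    ∀ v ∈ mVerts (M \ {s(x, y)}), ¬ G.Adj x v := by
  obtain ⟨⟨hMsub, hMpw⟩, hUR⟩ := hM
  have hGxy : G.Adj x y := hMsub he
  have hA : mVerts (M \ {s(x, y)}) = mVerts M \ {x, y} := by
    ext v
    constructor
    · rintro ⟨f, ⟨hfM, hfne⟩, hvf⟩
      refine ⟨⟨f, hfM, hvf⟩, ?_⟩
      intro hv
      apply hMpw hfM he hfne v hvf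
      rcases hv with hv | hv
      · subst hv; simp
      · simp only [Set.mem_singleton_iff] at hv; subst hv; simp
    · rintro ⟨⟨f, hfM, hvf⟩, hv⟩
      refine ⟨f, ⟨hfM, ?_⟩, hvf⟩
      intro hf
      simp only [Set.mem_singleton_iff] at hf
      subst hf
      rcases Sym2.mem_iff.mp hvf with rfl | rfl
      · exact hv (by simp)
      · exact hv (by simp)
  have hxS' : x ∉ mVerts (M \ {s(x, y)}) := by
    rw [hA]; rintro ⟨-, h⟩; exact h (by simp)
  have hyS' : y ∉ mVerts (M \ {s(x, y)}) := by
    rw [hA]; rintro ⟨-, h⟩; exact h (by simp)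
  have hsub : mVerts (M \ {s(x, y)}) ⊆ mVerts M := by
    rw [hA]; exact Set.diff_subset
  have hpart2 : ∀ v ∈ mVerts (M \ {s(x, y)}), ¬ G.Adj x v := by
    intro v hv hadj
    have hvS : v ∈ mVerts M := hsub hv
    have hmem : (⟨v, hvS⟩ : mVerts M) ∈ (G.induce (mVerts M)).neighborSet ⟨x, hx⟩ := hadj
    rw [hpendant, Set.mem_singleton_iff] at hmem
    have hvy : v = y := congrArg Subtype.val hmem
    subst hvy
    exact hyS' hv
  refine ⟨⟨⟨fun f hf => hMsub hf.1, hMpw.mono Set.diff_subset⟩, ?_⟩, hpart2⟩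
  set S' := mVerts (M \ {s(x, y)}) with hS'
  let ι : S' → mVerts M := fun v => ⟨v.1, hsub v.2⟩
  have hι : Function.Injective ι := by
    intro a b h
    have h2 := congrArg Subtype.val h
    simp only [ι] at h2
    exact Subtype.ext h2
  let e₀ : Sym2 (mVerts M) := s(⟨x, hx⟩, ⟨y, hy⟩)
  let L : Set (Sym2 S') → Set (Sym2 (mVerts M)) := fun N => (Sym2.map ι '' N) ∪ {e₀}
  have hx_not : ∀ (N : Set (Sym2 S')) (f : Sym2 (mVerts M)),
      f ∈ Sym2.map ι '' N → (⟨x, hx⟩ : mVerts M) ∉ f := by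
    rintro N f ⟨g, hg, rfl⟩ hxf
    obtain ⟨a, ha, hax⟩ := Sym2.mem_map.mp hxf
    have hax' : (a : V) = x := congrArg Subtype.val hax
    exact hxS' (hax' ▸ a.2)
  have hLinj : Function.Injective L := by
    have key : ∀ N1 N2, L N1 = L N2 → Sym2.map ι '' N1 ⊆ Sym2.map ι '' N2 := by
      intro N1 N2 h f hf
      have hf2 : f ∈ L N2 := h ▸ Set.mem_union_left _ hf
      rcases hf2 with h2 | h2
      · exact h2
      · exfalso
        apply hx_not N1 f hf
        rw [Set.mem_singleton_iff.mp h2]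
        exact Sym2.mem_mk_left _ _
    intro N1 N2 h
    have himg : Sym2.map ι '' N1 = Sym2.map ι '' N2 :=
      Set.Subset.antisymm (key N1 N2 h) (key N2 N1 h.symm)
    exact Set.image_injective.mpr (Sym2.map.injective hι) himg
  have hLperf : ∀ N, IsPerfectM (G.induce S') N → IsPerfectM (G.induce (mVerts M)) (L N) := by
    rintro N ⟨⟨hNsub, hNpw⟩, hNsat⟩
    refine ⟨⟨?_, ?_⟩, ?_⟩
    · rintro f (⟨g, hg, rfl⟩ | hf)
      · revert hg
        induction g using Sym2.ind with
        | _ a b =>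
          intro hg
          have h1 : (G.induce S').Adj a b := hNsub hg
          exact (SimpleGraph.mem_edgeSet _).mpr (show G.Adj a.1 b.1 from h1)
      · rw [Set.mem_singleton_iff.mp hf]
        exact (SimpleGraph.mem_edgeSet _).mpr (show G.Adj x y from hGxy)
    · rintro f hf g hg hfg v hvf hvg
      rcases hf with ⟨f', hf', rfl⟩ | hf <;> rcases hg with ⟨g', hg', rfl⟩ | hg
      · have hne : f' ≠ g' := fun h => hfg (by rw [h])
        obtain ⟨a, haf, rfl⟩ := Sym2.mem_map.mp hvf
        obtain ⟨b, hbg, hba⟩ := Sym2.mem_map.mp hvg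
        exact hNpw hf' hg' hne a haf (hι hba ▸ hbg)
      · rw [Set.mem_singleton_iff] at hg; subst hg
        obtain ⟨a, haf, rfl⟩ := Sym2.mem_map.mp hvf
        rcases Sym2.mem_iff.mp hvg with h | h
        · have h' : (a : V) = x := congrArg Subtype.val h
          exact hxS' (h' ▸ a.2)
        · have h' : (a : V) = y := congrArg Subtype.val h
          exact hyS' (h' ▸ a.2)
      · rw [Set.mem_singleton_iff] at hf; subst hf
        obtain ⟨a, haf, rfl⟩ := Sym2.mem_map.mp hvg
        rcases Sym2.mem_iff.mp hvf with h | h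
        · have h' : (a : V) = x := congrArg Subtype.val h
          exact hxS' (h' ▸ a.2)
        · have h' : (a : V) = y := congrArg Subtype.val h
          exact hyS' (h' ▸ a.2)
      · rw [Set.mem_singleton_iff] at hf hg
        exact hfg (hf.trans hg.symm)
    · intro v
      by_cases hvx : v.1 = x
      · exact ⟨e₀, Or.inr rfl, Sym2.mem_iff.mpr (Or.inl (Subtype.ext hvx))⟩
      by_cases hvy : v.1 = y
      · exact ⟨e₀, Or.inr rfl, Sym2.mem_iff.mpr (Or.inr (Subtype.ext hvy))⟩
      have hvS' : v.1 ∈ S' := by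
        rw [hA]
        refine ⟨v.2, ?_⟩
        rintro (h | h)
        · exact hvx h
        · exact hvy (Set.mem_singleton_iff.mp h)
      obtain ⟨f', hf', hvf'⟩ := hNsat ⟨v.1, hvS'⟩
      exact ⟨Sym2.map ι f', Or.inl ⟨f', hf', rfl⟩,
        Sym2.mem_map.mpr ⟨⟨v.1, hvS'⟩, hvf', Subtype.ext rfl⟩⟩
  let N₀ : Set (Sym2 S') := {f | Sym2.map Subtype.val f ∈ M \ {s(x, y)}}
  have hN₀ : IsPerfectM (G.induce S') N₀ := by
    refine ⟨⟨?_, ?_⟩, ?_⟩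
    · intro f hf
      revert hf
      induction f using Sym2.ind with
      | _ a b =>
        intro hf
        have h1 : s(a.1, b.1) ∈ M := hf.1
        exact (SimpleGraph.mem_edgeSet _).mpr
          (show G.Adj a.1 b.1 from (SimpleGraph.mem_edgeSet _).mp (hMsub h1))
    · intro f hf g hg hfg v hvf hvg
      have hne : Sym2.map Subtype.val f ≠ Sym2.map Subtype.val g :=
        fun h => hfg (Sym2.map.injective Subtype.val_injective h)
      exact hMpw hf.1 hg.1 hne v.1 (Sym2.mem_map.mpr ⟨v, hvf, rfl⟩)
        (Sym2.mem_map.mpr ⟨v, hvg, rfl⟩)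
    · rintro ⟨v, hv⟩
      obtain ⟨f, hfM', hvf⟩ := hv
      have haS : ∀ w, w ∈ f → w ∈ S' := fun w hw => ⟨f, hfM', hw⟩
      revert hfM' hvf haS
      induction f using Sym2.ind with
      | _ a b =>
        intro hfM' hvf haS
        have haS' : a ∈ S' := haS a (by simp)
        have hbS' : b ∈ S' := haS b (by simp)
        refine ⟨s(⟨a, haS'⟩, ⟨b, hbS'⟩), ?_, ?_⟩
        · show Sym2.map Subtype.val s(⟨a, haS'⟩, ⟨b, hbS'⟩) ∈ M \ {s(x, y)}
          simpa using hfM'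
        · rcases Sym2.mem_iff.mp hvf with rfl | rfl
          · exact Sym2.mem_iff.mpr (Or.inl (Subtype.ext rfl))
          · exact Sym2.mem_iff.mpr (Or.inr (Subtype.ext rfl))
  refine ⟨N₀, hN₀, ?_⟩
  intro N' hN'
  obtain ⟨Nstar, _, huniq⟩ := hUR
  have hLL : L N' = L N₀ :=
    (huniq _ (hLperf N' hN')).trans (huniq _ (hLperf N₀ hN₀)).symm
  exact hLinj hLL
end

section
/- Let G be a graph, X a feedback vertex set of G with |X| ≤ n − 2ℓ, and suppose G − X has a matching of size at least ℓ. Then G has an acyclic matching of size at least ℓ. -/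
lemma acyclic_of_embedding {V W : Type*} {G : SimpleGraph V} {H : SimpleGraph W}
    (f : G ↪g H) (h : H.IsAcyclic) : G.IsAcyclic := by
  intro v c hc
  exact h (c.map f.toHom) (hc.map f.injective)

theorem stmt19 {V : Type*} [Fintype V] (G : SimpleGraph V) (X : Set V) (ℓ : ℕ)
    (hX : (G.induce Xᶜ).IsAcyclic)
    (hsize : X.ncard + 2 * ℓ ≤ Fintype.card V)
    (hmatch : ∃ N : Set (Sym2 (Xᶜ : Set V)),
      IsMatching (G.induce Xᶜ) N ∧ ℓ ≤ N.ncard) :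
    ∃ M : Set (Sym2 V), IsAcyclicMatching G M ∧ ℓ ≤ M.ncard := by
  obtain ⟨N, ⟨hNsub, hNpw⟩, hNcard⟩ := hmatch
  have hinj : Function.Injective (Sym2.map (Subtype.val : (Xᶜ : Set V) → V)) :=
    Sym2.map.injective Subtype.val_injective
  refine ⟨Sym2.map Subtype.val '' N, ⟨⟨?_, ?_⟩, ?_⟩, ?_⟩
  · rintro e ⟨e', he', rfl⟩
    have := hNsub he'
    induction e' with
    | h x y => exact this
  · rintro e ⟨e', he', rfl⟩ f ⟨f', hf', rfl⟩ hne v hv hv'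
    have hne' : e' ≠ f' := fun h => hne (by rw [h])
    obtain ⟨u, hu, rfl⟩ := Sym2.mem_map.mp hv
    obtain ⟨u', hu', huv⟩ := Sym2.mem_map.mp hv'
    exact hNpw he' hf' hne' u hu (Subtype.val_injective huv ▸ hu')
  · have hsub : mVerts (Sym2.map Subtype.val '' N) ⊆ Xᶜ := by
      rintro v ⟨e, ⟨e', _, rfl⟩, hv⟩
      obtain ⟨u, _, rfl⟩ := Sym2.mem_map.mp hv
      exact u.2
    exact acyclic_of_embedding (G.induceHomOfLE hsub) hX
  · rw [Set.ncard_image_of_injective _ hinj]; exact hNcard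
end
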